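/- If a tripartite density matrix ρ_ABC saturates strong subadditivity, i.e., S(ρ_A) + S(ρ_ABC) = S(ρ_AB) + S(ρ_AC), then C(ρ_AB) + C(ρ_AC) ≥ C(ρ_ABC), where C is the relative entropy of coherence in a fixed product basis. -/

import Mathlib

open Matrix ComplexOrder

/-- The von Neumann entropy `S(ρ) = -Tr(ρ log ρ)` via eigenvalues (0 if not Hermitian). -/
noncomputable def vnEnt {ι : Type} [Fintype ι] [DecidableEq ι] (ρ : Matrix ι ι ℂ) : ℝ :=
  if h : ρ.IsHermitian then ∑ i, Real.negMulLog (h.eigenvalues i) else 0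

/-- The dephasing (diagonal part) of a matrix in the fixed product basis. -/
noncomputable def deph {ι : Type} [Fintype ι] [DecidableEq ι] (ρ : Matrix ι ι ℂ) :
    Matrix ι ι ℂ :=
  Matrix.diagonal (fun k => ρ k k)

/-- Relative entropy of coherence `C(ρ) = S(ρ_I) − S(ρ)`. -/
noncomputable def cohRE {ι : Type} [Fintype ι] [DecidableEq ι] (ρ : Matrix ι ι ℂ) : ℝ :=
  vnEnt (deph ρ) - vnEnt ρ

variable {a b c : ℕ}

/-- Partial trace over the third subsystem. -/
noncomputable def ptrC (ρ : Matrix (Fin a × Fin b × Fin c) (Fin a × Fin b × Fin c) ℂ) :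
    Matrix (Fin a × Fin b) (Fin a × Fin b) ℂ :=
  fun p q => ∑ k : Fin c, ρ (p.1, p.2, k) (q.1, q.2, k)

/-- Partial trace over the second subsystem. -/
noncomputable def ptrB (ρ : Matrix (Fin a × Fin b × Fin c) (Fin a × Fin b × Fin c) ℂ) :
    Matrix (Fin a × Fin c) (Fin a × Fin c) ℂ :=
  fun p q => ∑ k : Fin b, ρ (p.1, k, p.2) (q.1, k, q.2)

/-- Partial trace over the second and third subsystems. -/
noncomputable def ptrBC (ρ : Matrix (Fin a × Fin b × Fin c) (Fin a × Fin b × Fin c) ℂ) :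
    Matrix (Fin a) (Fin a) ℂ :=
  fun p q => ∑ j : Fin b, ∑ k : Fin c, ρ (p, j, k) (q, j, k)




section AuxP
open Polynomial

lemma charpoly_diagonal2 {n : Type} [Fintype n] [DecidableEq n] (d : n → ℂ) :
    (diagonal d).charpoly = ∏ i, ((X : ℂ[X]) - C (d i)) := by
  have : charmatrix (diagonal d) = diagonal (fun i => (X : ℂ[X]) - C (d i)) := by
    ext i j
    by_cases h : i = j
    · subst h; simp [charmatrix_apply_eq]
    · simp [charmatrix_apply_ne _ _ _ h, diagonal_apply_ne _ h]
  rw [Matrix.charpoly, this, det_diagonal]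



lemma charpoly_conj' {n : Type} [Fintype n] [DecidableEq n]
    (P Q M : Matrix n n ℂ) (hPQ : P * Q = 1) (hQP : Q * P = 1) :
    (P * M * Q).charpoly = M.charpoly := by
  have hmap : ∀ A B : Matrix n n ℂ, (A * B).map (C : ℂ →+* ℂ[X]) = A.map C * B.map C :=
    fun A B => Matrix.map_mul
  have key : charmatrix (P * M * Q) = P.map C * charmatrix M * Q.map C := by
    rw [charmatrix, charmatrix, mul_sub, sub_mul]
    congr 1
    · rw [mul_assoc, (Matrix.scalar_commute (X : ℂ[X]) (fun r => Commute.all _ _) (Q.map C)).eq,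
        ← mul_assoc, ← hmap, hPQ]
      simp
    · show (P * M * Q).map (C : ℂ →+* ℂ[X]) = _
      rw [RingHom.mapMatrix_apply, hmap, hmap]
  have hdet : det (Matrix.map P C) * det (Matrix.map Q C) = 1 := by
    rw [← det_mul, ← hmap, hPQ]; simp
  calc (P * M * Q).charpoly = det (P.map C * charmatrix M * Q.map C) := by
        rw [Matrix.charpoly, key]
    _ = det (Matrix.map P C) * det (Matrix.map Q C) * M.charpoly := by
        rw [det_mul, det_mul, Matrix.charpoly]; ring
    _ = M.charpoly := by rw [hdet, one_mul]

lemma sum_f_eigvals_diagonal {n : Type} [Fintype n] [DecidableEq n] (d : n → ℝ)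
    (h : (diagonal (fun i => (d i : ℂ))).IsHermitian) (f : ℝ → ℝ) :
    ∑ i, f (h.eigenvalues i) = ∑ i, f (d i) := by
  set A : Matrix n n ℂ := diagonal (fun i => (d i : ℂ)) with hA
  have hU1 : (h.eigenvectorUnitary : Matrix n n ℂ) * (star h.eigenvectorUnitary : Matrix n n ℂ) = 1 :=
    (Matrix.mem_unitaryGroup_iff).mp (h.eigenvectorUnitary).2
  have hU2 : (star h.eigenvectorUnitary : Matrix n n ℂ) * (h.eigenvectorUnitary : Matrix n n ℂ) = 1 :=
    (Matrix.mem_unitaryGroup_iff').mp (h.eigenvectorUnitary).2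
  have hcp : A.charpoly = (diagonal (Complex.ofReal ∘ h.eigenvalues)).charpoly := by
    conv_lhs => rw [h.spectral_theorem]
    exact charpoly_conj' _ _ _ hU1 hU2
  have hdiagroots : ∀ c : n → ℂ, (diagonal c).charpoly.roots = Finset.univ.val.map c := by
    intro c
    rw [charpoly_diagonal2 c]
    rw [← Polynomial.roots_multiset_prod_X_sub_C (Finset.univ.val.map c)]
    congr 1
    rw [Multiset.map_map]
    rfl
  have hroots : Finset.univ.val.map (fun i => (d i : ℂ))
      = Finset.univ.val.map (fun i => ((h.eigenvalues i : ℝ) : ℂ)) := by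
    have h1 := hdiagroots (fun i => (d i : ℂ))
    have h2 := hdiagroots (Complex.ofReal ∘ h.eigenvalues)
    rw [← h1, hcp, h2]
    rfl
  have hmult : Finset.univ.val.map d = Finset.univ.val.map h.eigenvalues := by
    apply Multiset.map_injective Complex.ofReal_injective
    rw [Multiset.map_map, Multiset.map_map]
    exact hroots.symm ▸ hroots
  calc ∑ i, f (h.eigenvalues i) = ((Finset.univ.val.map h.eigenvalues).map f).sum := by
        rw [Multiset.map_map]; rfl
    _ = ((Finset.univ.val.map d).map f).sum := by rw [hmult]
    _ = ∑ i, f (d i) := by rw [Multiset.map_map]; rfl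



end AuxP

lemma vnEnt_le_diag {n : Type} [Fintype n] [DecidableEq n] {ρ : Matrix n n ℂ}
    (hρ : ρ.PosSemidef) : vnEnt ρ ≤ ∑ k, Real.negMulLog (ρ k k).re := by
  have h := hρ.1
  set U : Matrix n n ℂ := (h.eigenvectorUnitary : Matrix n n ℂ) with hUdef
  set lam := h.eigenvalues with hlam
  set w : n → n → ℝ := fun k j => Complex.normSq (U k j) with hw
  have hwnn : ∀ k j, 0 ≤ w k j := fun k j => Complex.normSq_nonneg _
  have hU1 : U * star U = 1 := (Matrix.mem_unitaryGroup_iff).mp (h.eigenvectorUnitary).2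
  have hU2 : star U * U = 1 := (Matrix.mem_unitaryGroup_iff').mp (h.eigenvectorUnitary).2
  have hrow : ∀ k, ∑ j, w k j = 1 := by
    intro k
    have := congrFun (congrFun hU1 k) k
    rw [Matrix.mul_apply, Matrix.one_apply_eq] at this
    have : ((∑ j, w k j : ℝ) : ℂ) = 1 := by
      rw [← this]
      push_cast
      refine Finset.sum_congr rfl fun j _ => ?_
      simp [hw, Matrix.star_apply, Complex.star_def, Complex.mul_conj]
    exact_mod_cast this
  have hcol : ∀ j, ∑ k, w k j = 1 := by
    intro j
    have := congrFun (congrFun hU2 j) j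
    rw [Matrix.mul_apply, Matrix.one_apply_eq] at this
    have : ((∑ k, w k j : ℝ) : ℂ) = 1 := by
      rw [← this]
      push_cast
      refine Finset.sum_congr rfl fun k _ => ?_
      simp [hw, Matrix.star_apply, Complex.star_def, Complex.mul_conj, mul_comm]
    exact_mod_cast this
  have hdiag : ∀ k, (ρ k k).re = ∑ j, w k j * lam j := by
    intro k
    have hcoe : (RCLike.ofReal : ℝ → ℂ) = Complex.ofReal := rfl
    conv_lhs => rw [h.spectral_theorem]
    rw [Unitary.conjStarAlgAut_apply, hcoe, ← hUdef, Matrix.mul_apply]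
    have : ∀ j, (U * Matrix.diagonal (Complex.ofReal ∘ lam)) k j * (star U) j k
        = ((w k j * lam j : ℝ) : ℂ) := by
      intro j
      rw [Matrix.mul_diagonal, Matrix.star_apply]
      simp only [Function.comp_apply]
      rw [mul_comm (U k j) ((lam j : ℝ) : ℂ), mul_assoc, Complex.star_def, Complex.mul_conj]
      norm_cast
      simp only [hw]
      ring
    rw [Finset.sum_congr rfl (fun j _ => this j), ← Complex.ofReal_sum, Complex.ofReal_re]
  have hjensen : ∀ k, ∑ j, w k j * Real.negMulLog (lam j) ≤ Real.negMulLog ((ρ k k).re) := by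
    intro k
    rw [hdiag k]
    have := Real.concaveOn_negMulLog.le_map_sum (t := Finset.univ) (w := w k) (p := lam)
      (fun j _ => hwnn k j) (hrow k) (fun j _ => hρ.eigenvalues_nonneg j)
    simpa using this
  have : vnEnt ρ = ∑ j, Real.negMulLog (lam j) := by rw [vnEnt, dif_pos h]
  rw [this]
  calc ∑ j, Real.negMulLog (lam j) = ∑ j, (∑ k, w k j) * Real.negMulLog (lam j) := by
        simp [hcol]
    _ = ∑ k, ∑ j, w k j * Real.negMulLog (lam j) := by
        rw [Finset.sum_comm]
        simp [Finset.sum_mul]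
    _ ≤ ∑ k, Real.negMulLog ((ρ k k).re) := Finset.sum_le_sum fun k _ => hjensen k

section Aux
open Polynomial

lemma vnEnt_deph {n : Type} [Fintype n] [DecidableEq n] {ρ : Matrix n n ℂ}
    (h : ρ.IsHermitian) :
    vnEnt (deph ρ) = ∑ k, Real.negMulLog (ρ k k).re := by
  have hre : ∀ k, ρ k k = (((ρ k k).re : ℝ) : ℂ) := by
    intro k
    have := congrFun (congrFun h k) k
    rw [Matrix.conjTranspose_apply] at this
    exact (Complex.conj_eq_iff_re.mp this).symm
  have hd : deph ρ = Matrix.diagonal (fun k => (((ρ k k).re : ℝ) : ℂ)) := by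
    unfold deph
    exact congrArg Matrix.diagonal (funext hre)
  rw [hd]
  have hH : (Matrix.diagonal (fun k => (((ρ k k).re : ℝ) : ℂ))).IsHermitian := by
    apply Matrix.isHermitian_diagonal_of_self_adjoint
    funext k
    exact Complex.conj_ofReal _
  rw [vnEnt, dif_pos hH]
  exact sum_f_eigvals_diagonal _ hH Real.negMulLog

end Aux


lemma entropy_marg {B : Type} [Fintype B] (q : B → ℝ) (c : ℝ) :
    -((∑ j, q j) * c) = ∑ j, -(q j * c) := by
  rw [Finset.sum_neg_distrib, ← Finset.sum_mul]

lemma classical_SSA {A B C : Type} [Fintype A] [Fintype B] [Fintype C]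
    (p : A → B → C → ℝ) (hp : ∀ i j k, 0 ≤ p i j k)
    (hsum : ∑ i, ∑ j, ∑ k, p i j k = 1) :
    (∑ i, ∑ j, ∑ k, Real.negMulLog (p i j k))
      + ∑ i, Real.negMulLog (∑ j, ∑ k, p i j k)
      ≤ (∑ i, ∑ j, Real.negMulLog (∑ k, p i j k))
        + ∑ i, ∑ k, Real.negMulLog (∑ j, p i j k) := by
  classical
  set pAB : A → B → ℝ := fun i j => ∑ k, p i j k with hpAB
  set pAC : A → C → ℝ := fun i k => ∑ j, p i j k with hpAC
  set pA : A → ℝ := fun i => ∑ j, ∑ k, p i j k with hpA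
  have hpABnn : ∀ i j, 0 ≤ pAB i j := fun i j => Finset.sum_nonneg fun k _ => hp _ _ _
  have hpACnn : ∀ i k, 0 ≤ pAC i k := fun i k => Finset.sum_nonneg fun j _ => hp _ _ _
  have hpAnn : ∀ i, 0 ≤ pA i := fun i =>
    Finset.sum_nonneg fun j _ => Finset.sum_nonneg fun k _ => hp _ _ _
  have hle_AB : ∀ i j k, p i j k ≤ pAB i j := fun i j k =>
    Finset.single_le_sum (fun k _ => hp i j k) (Finset.mem_univ k)
  have hle_AC : ∀ i j k, p i j k ≤ pAC i k := fun i j k =>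
    Finset.single_le_sum (fun j _ => hp i j k) (Finset.mem_univ j)
  have hAB_le_A : ∀ i j, pAB i j ≤ pA i := fun i j =>
    Finset.single_le_sum (fun j _ => hpABnn i j) (Finset.mem_univ j)
  have hABsum : ∀ i, ∑ j, pAB i j = pA i := fun i => rfl
  have hACsum : ∀ i, ∑ k, pAC i k = pA i := fun i => Finset.sum_comm
  -- express marginal entropies as triple sums
  have eA : ∑ i, Real.negMulLog (pA i)
      = ∑ i, ∑ j, ∑ k, -(p i j k * Real.log (pA i)) := by
    refine Finset.sum_congr rfl fun i _ => ?_
    rw [Real.negMulLog, neg_mul, entropy_marg]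
    exact Finset.sum_congr rfl fun j _ => entropy_marg _ _
  have eAB : ∑ i, ∑ j, Real.negMulLog (pAB i j)
      = ∑ i, ∑ j, ∑ k, -(p i j k * Real.log (pAB i j)) := by
    refine Finset.sum_congr rfl fun i _ => Finset.sum_congr rfl fun j _ => ?_
    rw [Real.negMulLog, neg_mul]
    exact entropy_marg _ _
  have eAC : ∑ i, ∑ k, Real.negMulLog (pAC i k)
      = ∑ i, ∑ j, ∑ k, -(p i j k * Real.log (pAC i k)) := by
    refine Finset.sum_congr rfl fun i _ => ?_
    rw [Finset.sum_comm]
    refine Finset.sum_congr rfl fun k _ => ?_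
    rw [Real.negMulLog, neg_mul]
    exact entropy_marg _ _
  rw [eA, eAB, eAC]
  have step1 : ∀ i j k,
      Real.negMulLog (p i j k) + -(p i j k * Real.log (pA i))
        ≤ (-(p i j k * Real.log (pAB i j)) + -(p i j k * Real.log (pAC i k)))
          + ((if 0 < p i j k then pAB i j * pAC i k / pA i else p i j k) - p i j k) := by
    intro i j k
    by_cases hpos : 0 < p i j k
    · rw [if_pos hpos]
      have hA : 0 < pA i := lt_of_lt_of_le hpos ((hle_AB i j k).trans (hAB_le_A i j))
      have hABp : 0 < pAB i j := lt_of_lt_of_le hpos (hle_AB i j k)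
      have hACp : 0 < pAC i k := lt_of_lt_of_le hpos (hle_AC i j k)
      set u : ℝ := pAB i j * pAC i k / (p i j k * pA i) with hu
      have hupos : 0 < u := by positivity
      have hlog : Real.log u ≤ u - 1 := Real.log_le_sub_one_of_pos hupos
      have hlogu : Real.log u = Real.log (pAB i j) + Real.log (pAC i k)
          - Real.log (p i j k) - Real.log (pA i) := by
        rw [hu, Real.log_div (by positivity) (by positivity), Real.log_mul hABp.ne' hACp.ne',
          Real.log_mul hpos.ne' hA.ne']
        ring
      have hmul : p i j k * u = pAB i j * pAC i k / pA i := by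
        rw [hu]
        field_simp
      have := mul_le_mul_of_nonneg_left hlog (le_of_lt hpos)
      rw [hlogu] at this
      have h2 : p i j k * (u - 1) = pAB i j * pAC i k / pA i - p i j k := by
        rw [mul_sub, hmul, mul_one]
      rw [h2] at this
      rw [Real.negMulLog, neg_mul]
      ring_nf at this ⊢
      linarith [this]
    · have hz : p i j k = 0 := le_antisymm (not_lt.mp hpos) (hp i j k)
      rw [if_neg hpos, hz]
      simp
  set q' : A → B → C → ℝ :=
    fun i j k => if 0 < p i j k then pAB i j * pAC i k / pA i else p i j k with hq'def
  set r : A → B → C → ℝ :=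
    fun i j k => if 0 < pA i then pAB i j * pAC i k / pA i else 0 with hrdef
  have hq'r : ∀ i j k, q' i j k ≤ r i j k := by
    intro i j k
    by_cases hpos : 0 < p i j k
    · have hA : 0 < pA i := lt_of_lt_of_le hpos ((hle_AB i j k).trans (hAB_le_A i j))
      simp only [hq'def, hrdef, if_pos hpos, if_pos hA]
      exact le_refl _
    · have hz : p i j k = 0 := le_antisymm (not_lt.mp hpos) (hp i j k)
      simp only [hq'def, hrdef, if_neg hpos, hz]
      by_cases hA : 0 < pA i
      · rw [if_pos hA]
        exact div_nonneg (mul_nonneg (hpABnn i j) (hpACnn i k)) (hpAnn i)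
      · rw [if_neg hA]
  have hrsum : ∀ i, ∑ j, ∑ k, r i j k = if 0 < pA i then pA i else 0 := by
    intro i
    by_cases hA : 0 < pA i
    · simp only [hrdef, if_pos hA]
      have hinner : ∀ j, ∑ k, pAB i j * pAC i k / pA i = pAB i j := by
        intro j
        rw [← Finset.sum_div, ← Finset.mul_sum, hACsum i]
        field_simp
      rw [Finset.sum_congr rfl fun j _ => hinner j]
    · simp [hrdef, if_neg hA]
  have hrtot : ∑ i, ∑ j, ∑ k, r i j k ≤ 1 := by
    rw [← hsum]
    refine Finset.sum_le_sum fun i _ => ?_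
    rw [hrsum i]
    by_cases hA : 0 < pA i
    · rw [if_pos hA]
    · rw [if_neg hA]; exact hpAnn i
  have hq'tot : ∑ i, ∑ j, ∑ k, q' i j k ≤ 1 :=
    le_trans (Finset.sum_le_sum fun i _ => Finset.sum_le_sum fun j _ =>
      Finset.sum_le_sum fun k _ => hq'r i j k) hrtot
  have e1 : ∑ i, ∑ j, ∑ k, (Real.negMulLog (p i j k) + -(p i j k * Real.log (pA i)))
      = (∑ i, ∑ j, ∑ k, Real.negMulLog (p i j k))
        + ∑ i, ∑ j, ∑ k, -(p i j k * Real.log (pA i)) := by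
    simp [Finset.sum_add_distrib]
  have e2 : ∑ i, ∑ j, ∑ k, ((-(p i j k * Real.log (pAB i j)) + -(p i j k * Real.log (pAC i k)))
        + (q' i j k - p i j k))
      = (∑ i, ∑ j, ∑ k, (-(p i j k * Real.log (pAB i j)) + -(p i j k * Real.log (pAC i k))))
        + ∑ i, ∑ j, ∑ k, (q' i j k - p i j k) := by
    simp [Finset.sum_add_distrib]
  have e3 : ∑ i, ∑ j, ∑ k, (-(p i j k * Real.log (pAB i j)) + -(p i j k * Real.log (pAC i k)))
      = (∑ i, ∑ j, ∑ k, -(p i j k * Real.log (pAB i j)))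
        + ∑ i, ∑ j, ∑ k, -(p i j k * Real.log (pAC i k)) := by
    simp [Finset.sum_add_distrib]
  have splitsub : ∑ i, ∑ j, ∑ k, (q' i j k - p i j k)
      = (∑ i, ∑ j, ∑ k, q' i j k) - ∑ i, ∑ j, ∑ k, p i j k := by
    simp [Finset.sum_sub_distrib]
  have main : (∑ i, ∑ j, ∑ k, (Real.negMulLog (p i j k) + -(p i j k * Real.log (pA i))))
      ≤ ∑ i, ∑ j, ∑ k, ((-(p i j k * Real.log (pAB i j)) + -(p i j k * Real.log (pAC i k)))
          + (q' i j k - p i j k)) :=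
    Finset.sum_le_sum fun i _ => Finset.sum_le_sum fun j _ =>
      Finset.sum_le_sum fun k _ => step1 i j k
  rw [e1, e2, e3, splitsub, hsum] at main
  linarith [main, hq'tot]

/-- If a tripartite density matrix `ρ_ABC` saturates strong subadditivity,
i.e. `S(ρ_A) + S(ρ_ABC) = S(ρ_AB) + S(ρ_AC)`, then
`C(ρ_AB) + C(ρ_AC) ≥ C(ρ_ABC)`, where `C` is the relative entropy of coherence in the fixed
product basis. -/
theorem saturated_SSA_implies_subadditivity
    (ρ : Matrix (Fin a × Fin b × Fin c) (Fin a × Fin b × Fin c) ℂ)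
    (hρ : ρ.PosSemidef) (htr : ρ.trace = 1)
    (hSSA : vnEnt (ptrBC ρ) + vnEnt ρ = vnEnt (ptrC ρ) + vnEnt (ptrB ρ)) :
    cohRE ρ ≤ cohRE (ptrC ρ) + cohRE (ptrB ρ) := by
  classical
  set p : Fin a → Fin b → Fin c → ℝ := fun i j k => (ρ (i, j, k) (i, j, k)).re with hpdef
  have hstar : ∀ x y, star (ρ x y) = ρ y x := by
    intro x y
    have := congrFun (congrFun hρ.1 y) x
    rwa [Matrix.conjTranspose_apply] at this
  have hdiagnn : ∀ x, (0 : ℂ) ≤ ρ x x := by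
    intro x
    have h0 := hρ.dotProduct_mulVec_nonneg (Pi.single x 1)
    have : star (Pi.single x 1) ⬝ᵥ (ρ *ᵥ Pi.single x 1) = ρ x x := by
      rw [Matrix.mulVec_single, dotProduct]
      rw [Finset.sum_eq_single_of_mem x (Finset.mem_univ x) ?h1]
      case h1 =>
        intro y _ hy
        simp [Pi.single_apply, hy]
      simp [Pi.single_apply]
    rwa [this] at h0
  have hpnn : ∀ i j k, 0 ≤ p i j k := by
    intro i j k
    have := (Complex.le_def.mp (hdiagnn (i, j, k))).1
    simpa using this
  have hsum : ∑ i, ∑ j, ∑ k, p i j k = 1 := by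
    have h1 := congrArg Complex.re htr
    rw [Matrix.trace] at h1
    simp only [Matrix.diag, Complex.re_sum, Complex.one_re] at h1
    rw [← h1, Fintype.sum_prod_type]
    refine Finset.sum_congr rfl fun i _ => ?_
    rw [Fintype.sum_prod_type]
  have hAB : (ptrC ρ).IsHermitian := by
    ext x y
    rw [Matrix.conjTranspose_apply]
    show star (∑ k, ρ (y.1, y.2, k) (x.1, x.2, k)) = ∑ k, ρ (x.1, x.2, k) (y.1, y.2, k)
    rw [star_sum]
    exact Finset.sum_congr rfl fun k _ => hstar _ _
  have hAC : (ptrB ρ).IsHermitian := by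
    ext x y
    rw [Matrix.conjTranspose_apply]
    show star (∑ k, ρ (y.1, k, y.2) (x.1, k, x.2)) = ∑ k, ρ (x.1, k, x.2) (y.1, k, y.2)
    rw [star_sum]
    exact Finset.sum_congr rfl fun k _ => hstar _ _
  have hAH : (ptrBC ρ).IsHermitian := by
    ext x y
    rw [Matrix.conjTranspose_apply]
    show star (∑ j, ∑ k, ρ (y, j, k) (x, j, k)) = ∑ j, ∑ k, ρ (x, j, k) (y, j, k)
    rw [star_sum]
    refine Finset.sum_congr rfl fun j _ => ?_
    rw [star_sum]
    exact Finset.sum_congr rfl fun k _ => hstar _ _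
  have hA : (ptrBC ρ).PosSemidef := by
    refine .of_dotProduct_mulVec_nonneg hAH fun x => ?_
    have key : ∀ (j : Fin b) (k : Fin c),
        (0 : ℂ) ≤ ∑ pp, ∑ q, star (x pp) * ρ (pp, j, k) (q, j, k) * x q := by
      intro j k
      have := hρ.dotProduct_mulVec_nonneg (fun z => if z.2 = (j, k) then x z.1 else 0)
      convert this using 1
      rw [dotProduct, Fintype.sum_prod_type]
      refine Finset.sum_congr rfl fun pp _ => ?_
      rw [Fintype.sum_prod_type]
      rw [Finset.sum_eq_single_of_mem j (Finset.mem_univ j) ?nej]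
      case nej =>
        intro j' _ hj'
        apply Finset.sum_eq_zero
        intro k' _
        simp [Prod.ext_iff, hj']
      rw [Finset.sum_eq_single_of_mem k (Finset.mem_univ k) ?nek]
      case nek =>
        intro k' _ hk'
        simp [Prod.ext_iff, hk']
      simp only [Pi.star_apply, if_pos rfl, if_true]
      rw [Matrix.mulVec, dotProduct, Fintype.sum_prod_type, Finset.mul_sum]
      refine Finset.sum_congr rfl fun q _ => ?_
      rw [Fintype.sum_prod_type]
      rw [Finset.sum_eq_single_of_mem j (Finset.mem_univ j) ?nej2]
      case nej2 =>
        intro j' _ hj'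
        apply Finset.sum_eq_zero
        intro k' _
        simp [Prod.ext_iff, hj']
      rw [Finset.sum_eq_single_of_mem k (Finset.mem_univ k) ?nek2]
      case nek2 =>
        intro k' _ hk'
        simp [Prod.ext_iff, hk']
      simp only [if_pos rfl, if_true]
      ring
    have : (0 : ℂ) ≤ ∑ j, ∑ k, ∑ pp, ∑ q, star (x pp) * ρ (pp, j, k) (q, j, k) * x q :=
      Finset.sum_nonneg fun j _ => Finset.sum_nonneg fun k _ => key j k
    convert this using 1
    rw [dotProduct]
    have expand : ∀ pp, star x pp * (ptrBC ρ *ᵥ x) pp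
        = ∑ j, ∑ k, ∑ q, star (x pp) * ρ (pp, j, k) (q, j, k) * x q := by
      intro pp
      rw [Matrix.mulVec, dotProduct]
      calc star x pp * (∑ q, (∑ j, ∑ k, ρ (pp, j, k) (q, j, k)) * x q)
          = ∑ q, ∑ j, ∑ k, star (x pp) * ρ (pp, j, k) (q, j, k) * x q := by
            rw [Finset.mul_sum]
            refine Finset.sum_congr rfl fun q _ => ?_
            rw [Finset.sum_mul, Finset.mul_sum]
            refine Finset.sum_congr rfl fun j _ => ?_
            rw [Finset.sum_mul, Finset.mul_sum]
            refine Finset.sum_congr rfl fun k _ => ?_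
            simp only [Pi.star_apply]
            ring
        _ = ∑ j, ∑ q, ∑ k, star (x pp) * ρ (pp, j, k) (q, j, k) * x q := Finset.sum_comm
        _ = ∑ j, ∑ k, ∑ q, star (x pp) * ρ (pp, j, k) (q, j, k) * x q :=
            Finset.sum_congr rfl fun j _ => Finset.sum_comm
    rw [Finset.sum_congr rfl fun pp _ => expand pp]
    rw [Finset.sum_comm]
    exact Finset.sum_congr rfl fun j _ => Finset.sum_comm
  have dABC : vnEnt (deph ρ) = ∑ i, ∑ j, ∑ k, Real.negMulLog (p i j k) := by
    rw [vnEnt_deph hρ.1, Fintype.sum_prod_type]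
    exact Finset.sum_congr rfl fun i _ => Fintype.sum_prod_type _
  have dAB : vnEnt (deph (ptrC ρ)) = ∑ i, ∑ j, Real.negMulLog (∑ k, p i j k) := by
    rw [vnEnt_deph hAB, Fintype.sum_prod_type]
    refine Finset.sum_congr rfl fun i _ => Finset.sum_congr rfl fun j _ => ?_
    congr 1
    show (∑ k, ρ (i, j, k) (i, j, k)).re = _
    rw [Complex.re_sum]
  have dAC : vnEnt (deph (ptrB ρ)) = ∑ i, ∑ k, Real.negMulLog (∑ j, p i j k) := by
    rw [vnEnt_deph hAC, Fintype.sum_prod_type]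
    refine Finset.sum_congr rfl fun i _ => Finset.sum_congr rfl fun k _ => ?_
    congr 1
    show (∑ j, ρ (i, j, k) (i, j, k)).re = _
    rw [Complex.re_sum]
  have dA : vnEnt (ptrBC ρ) ≤ ∑ i, Real.negMulLog (∑ j, ∑ k, p i j k) := by
    refine le_trans (vnEnt_le_diag hA) (le_of_eq ?_)
    refine Finset.sum_congr rfl fun i _ => ?_
    congr 1
    show (∑ j, ∑ k, ρ (i, j, k) (i, j, k)).re = _
    rw [Complex.re_sum]
    exact Finset.sum_congr rfl fun j _ => Complex.re_sum _ _
  have hssa := classical_SSA p hpnn hsum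
  unfold cohRE
  rw [dABC, dAB, dAC]
  linarith [hssa, dA, hSSA]
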